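/- On the Shishkin mesh, assume the transition point satisfies ρ = ā⁻¹ ε ln N ≤ T/2. Then the coarse-part sum satisfies: Σ_{j=N/2+1}^{N} ∫_{ξ_{j−1}}^{ξ_j} (ξ_j − τ)(τ − ξ_{j−1}) ε⁻² e^{−ā τ/ε} dτ ≤ 2 ā⁻² h⁽²⁾ (e^{−ā ρ/ε} − e^{−ā T/ε}) ≤ 2 ā⁻² h⁽²⁾ N⁻¹ ≤ 4 T ā⁻² N⁻². -/

import Mathlib

/-- Shishkin transition point `ρ = min(T/2, ā⁻¹ ε ln N)`. -/
noncomputable def sRho (T abar ε : ℝ) (N : ℕ) : ℝ :=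
  min (T / 2) (abar⁻¹ * ε * Real.log N)

/-- Fine step size `h⁽¹⁾ = 2ρ/N`. -/
noncomputable def sH1 (T abar ε : ℝ) (N : ℕ) : ℝ := 2 * sRho T abar ε N / N

/-- Coarse step size `h⁽²⁾ = 2(T−ρ)/N`. -/
noncomputable def sH2 (T abar ε : ℝ) (N : ℕ) : ℝ :=
  2 * (T - sRho T abar ε N) / N

/-- Shishkin mesh points `ξ_i`. -/
noncomputable def sXi (T abar ε : ℝ) (N i : ℕ) : ℝ :=
  if i ≤ N / 2 then (i : ℝ) * sH1 T abar ε N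
  else sRho T abar ε N + ((i : ℝ) - (N : ℝ) / 2) * sH2 T abar ε N

lemma key_integral (abar ε a b : ℝ) (habar : 0 < abar) (hε : 0 < ε) (hab : a ≤ b) :
    (∫ τ in a..b, (b - τ) * (τ - a) * ((ε ^ 2)⁻¹ * Real.exp (-(abar * τ) / ε)))
      ≤ 2 * (abar ^ 2)⁻¹ * (b - a) *
        (Real.exp (-(abar * a) / ε) - Real.exp (-(abar * b) / ε)) := by
  have hε0 : ε ≠ 0 := ne_of_gt hε
  have ha0 : abar ≠ 0 := ne_of_gt habar
  set F : ℝ → ℝ := fun τ => Real.exp (-(abar * τ) / ε) *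
    (-((b - τ) * (τ - a)) / (abar * ε) - (a + b - 2 * τ) / abar ^ 2 + 2 * ε / abar ^ 3) with hF
  have hderiv : ∀ τ ∈ Set.uIcc a b, HasDerivAt F
      ((b - τ) * (τ - a) * ((ε ^ 2)⁻¹ * Real.exp (-(abar * τ) / ε))) τ := by
    intro τ _
    have hid : HasDerivAt (fun τ : ℝ => τ) 1 τ := hasDerivAt_id τ
    have h1 : HasDerivAt (fun τ : ℝ => Real.exp (-(abar * τ) / ε))
        ((-abar / ε) * Real.exp (-(abar * τ) / ε)) τ := by
      have := (Real.hasDerivAt_exp (-(abar * τ) / ε)).comp τ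
        (((hasDerivAt_id τ).const_mul abar).neg.div_const ε)
      simpa [mul_comm, Function.comp_def] using this
    have hA : HasDerivAt (fun τ : ℝ => (b - τ) * (τ - a)) ((0 - 1) * (τ - a) + (b - τ) * (1 - 0)) τ :=
      ((hasDerivAt_const τ b).sub hid).mul (hid.sub (hasDerivAt_const τ a))
    have h2 : HasDerivAt (fun τ : ℝ => -((b - τ) * (τ - a)) / (abar * ε) -
        (a + b - 2 * τ) / abar ^ 2 + 2 * ε / abar ^ 3)
        ((-(a + b - 2 * τ)) / (abar * ε) + 2 / abar ^ 2) τ := by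
      have := ((hA.neg.div_const (abar * ε)).sub
        (((hasDerivAt_const τ (a + b)).sub (hid.const_mul 2)).div_const (abar ^ 2))).add_const
        (2 * ε / abar ^ 3)
      refine this.congr_deriv ?_
      field_simp
      ring
    have := h1.mul h2
    refine this.congr_deriv ?_
    field_simp
    ring
  have hint : IntervalIntegrable (fun τ => (b - τ) * (τ - a) *
      ((ε ^ 2)⁻¹ * Real.exp (-(abar * τ) / ε))) MeasureTheory.volume a b := by
    apply Continuous.intervalIntegrable
    continuity
  rw [intervalIntegral.integral_eq_sub_of_hasDerivAt hderiv hint]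
  simp only [hF]
  set A := Real.exp (-(abar * a) / ε) with hA'
  set B := Real.exp (-(abar * b) / ε) with hB'
  have hApos : 0 < A := Real.exp_pos _
  have hBpos : 0 < B := Real.exp_pos _
  have hE : 1 + abar * (b - a) / ε ≤ Real.exp (abar * (b - a) / ε) := by
    linarith [Real.add_one_le_exp (abar * (b - a) / ε)]
  have hBE : B * Real.exp (abar * (b - a) / ε) = A := by
    rw [hA', hB', ← Real.exp_add]
    ring_nf
  set E := Real.exp (abar * (b - a) / ε) with hE'
  set u := abar * (b - a) / ε with hu'
  have hu : 0 ≤ u := by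
    rw [hu']
    have : 0 ≤ b - a := sub_nonneg.2 hab
    positivity
  have hux : abar * (b - a) = ε * u := by
    rw [hu']; field_simp
  have key : B * (3 * u + 2) ≤ A * (u + 2) := by
    nlinarith [mul_le_mul_of_nonneg_left hE (mul_nonneg hBpos.le (by linarith : (0:ℝ) ≤ u + 2)),
      mul_pos hBpos (by positivity : (0:ℝ) < 1), sq_nonneg u, hBpos.le]
  have heq : B * (-((b - b) * (b - a)) / (abar * ε) - (a + b - 2 * b) / abar ^ 2 + 2 * ε / abar ^ 3)
      - A * (-((b - a) * (a - a)) / (abar * ε) - (a + b - 2 * a) / abar ^ 2 + 2 * ε / abar ^ 3)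
      - 2 * (abar ^ 2)⁻¹ * (b - a) * (A - B)
      = ε * (B * (3 * u + 2) - A * (u + 2)) / abar ^ 3 := by
    have hrw : ε * (B * (3 * u + 2) - A * (u + 2))
        = B * (3 * (abar * (b - a)) + 2 * ε) - A * (abar * (b - a) + 2 * ε) := by
      rw [hux]; ring
    rw [hrw]
    field_simp
    ring
  have h3 : (0:ℝ) < abar ^ 3 := by positivity
  have h4 : ε * (B * (3 * u + 2) - A * (u + 2)) / abar ^ 3 ≤ 0 :=
    div_nonpos_of_nonpos_of_nonneg (mul_nonpos_of_nonneg_of_nonpos hε.le (by linarith)) h3.le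
  linarith [heq ▸ h4]

lemma tele_sum (g : ℕ → ℝ) (m n : ℕ) (h : m ≤ n) :
    ∑ j ∈ Finset.Icc (m + 1) n, (g (j - 1) - g j) = g m - g n := by
  induction n, h using Nat.le_induction with
  | base => simp
  | succ n hmn ih =>
    rw [Finset.sum_Icc_succ_top (by omega : m + 1 ≤ n + 1), ih]
    simp only [Nat.add_sub_cancel]
    ring

/-- coarse-part bound
`Σ_{j=N/2+1}^{N} ∫_{ξ_{j−1}}^{ξ_j} (ξ_j−τ)(τ−ξ_{j−1}) ε⁻² e^{−ā τ/ε} dτ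
 ≤ 2 ā⁻² h⁽²⁾ (e^{−ā ρ/ε} − e^{−ā T/ε}) ≤ 2 ā⁻² h⁽²⁾ N⁻¹ ≤ 4 T ā⁻² N⁻²`
on the Shishkin mesh, assuming `ρ = ā⁻¹ ε ln N ≤ T/2`. -/
theorem coarse_part_quadrature_sum_bound
    (T abar ε : ℝ) (N : ℕ) (hT : 0 < T) (habar : 0 < abar)
    (hε : 0 < ε) (hε1 : ε ≤ 1) (hN : 4 ≤ N) (hNeven : Even N)
    (hρ : abar⁻¹ * ε * Real.log N ≤ T / 2) :
    (∑ j ∈ Finset.Icc (N / 2 + 1) N,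
        ∫ τ in sXi T abar ε N (j - 1)..sXi T abar ε N j,
          (sXi T abar ε N j - τ) * (τ - sXi T abar ε N (j - 1)) *
            ((ε ^ 2)⁻¹ * Real.exp (-(abar * τ) / ε)))
      ≤ 2 * (abar ^ 2)⁻¹ * sH2 T abar ε N *
          (Real.exp (-(abar * sRho T abar ε N) / ε) - Real.exp (-(abar * T) / ε)) ∧
    2 * (abar ^ 2)⁻¹ * sH2 T abar ε N *
          (Real.exp (-(abar * sRho T abar ε N) / ε) - Real.exp (-(abar * T) / ε))
      ≤ 2 * (abar ^ 2)⁻¹ * sH2 T abar ε N * (N : ℝ)⁻¹ ∧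
    2 * (abar ^ 2)⁻¹ * sH2 T abar ε N * (N : ℝ)⁻¹
      ≤ 4 * T * (abar ^ 2)⁻¹ * ((N : ℝ) ^ 2)⁻¹ := by

  have hN0 : (0:ℝ) < N := by exact_mod_cast Nat.pos_of_ne_zero (by omega)
  have hN0' : (N:ℝ) ≠ 0 := ne_of_gt hN0
  have hhalf : ((N / 2 : ℕ) : ℝ) = (N : ℝ) / 2 := by
    obtain ⟨k, hk⟩ := hNeven
    subst hk
    have : (k + k) / 2 = k := by omega
    rw [this]
    push_cast
    ring
  have hρ0 : 0 ≤ sRho T abar ε N := by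
    apply le_min (by linarith)
    have h1N : (1:ℕ) ≤ N := by omega
    have : (1:ℝ) ≤ N := by exact_mod_cast h1N
    have hlog : 0 ≤ Real.log N := Real.log_nonneg this
    positivity
  have hρT : sRho T abar ε N ≤ T / 2 := min_le_left _ _
  have hρeq : sRho T abar ε N = abar⁻¹ * ε * Real.log N := min_eq_right hρ
  have hH2 : 0 ≤ sH2 T abar ε N := by
    unfold sH2
    apply div_nonneg (by linarith) hN0.le
  -- mesh point formula on the coarse part
  have hxi : ∀ j, N / 2 ≤ j → j ≤ N →
      sXi T abar ε N j = sRho T abar ε N + ((j : ℝ) - (N : ℝ) / 2) * sH2 T abar ε N := by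
    intro j h1 h2
    unfold sXi
    by_cases hj : j ≤ N / 2
    · have hj2 : j = N / 2 := le_antisymm hj h1
      subst hj2
      rw [if_pos le_rfl, hhalf]
      unfold sH1
      field_simp
      ring
    · rw [if_neg hj]
  have hxiN2 : sXi T abar ε N (N / 2) = sRho T abar ε N := by
    rw [hxi (N / 2) le_rfl (by omega), hhalf]
    ring
  have hxiN : sXi T abar ε N N = T := by
    rw [hxi N (by omega) le_rfl]
    unfold sH2
    field_simp
    ring
  have hstep : ∀ j ∈ Finset.Icc (N / 2 + 1) N,
      sXi T abar ε N j - sXi T abar ε N (j - 1) = sH2 T abar ε N := by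
    intro j hj
    simp only [Finset.mem_Icc] at hj
    rw [hxi j (by omega) hj.2, hxi (j - 1) (by omega) (by omega)]
    have : ((j - 1 : ℕ) : ℝ) = (j : ℝ) - 1 := by
      have : 1 ≤ j := by omega
      push_cast [this]
      ring
    rw [this]
    ring
  set g : ℕ → ℝ := fun j => Real.exp (-(abar * sXi T abar ε N j) / ε) with hg
  have hC : (0:ℝ) ≤ 2 * (abar ^ 2)⁻¹ * sH2 T abar ε N := by positivity
  refine ⟨?_, ?_, ?_⟩
  · -- part 1
    calc (∑ j ∈ Finset.Icc (N / 2 + 1) N,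
        ∫ τ in sXi T abar ε N (j - 1)..sXi T abar ε N j,
          (sXi T abar ε N j - τ) * (τ - sXi T abar ε N (j - 1)) *
            ((ε ^ 2)⁻¹ * Real.exp (-(abar * τ) / ε)))
        ≤ ∑ j ∈ Finset.Icc (N / 2 + 1) N,
            2 * (abar ^ 2)⁻¹ * sH2 T abar ε N * (g (j - 1) - g j) := by
          apply Finset.sum_le_sum
          intro j hj
          have hs := hstep j hj
          have hab : sXi T abar ε N (j - 1) ≤ sXi T abar ε N j := by linarith
          have hk := key_integral abar ε (sXi T abar ε N (j - 1)) (sXi T abar ε N j)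
            habar hε hab
          rw [hs] at hk
          exact hk
      _ = 2 * (abar ^ 2)⁻¹ * sH2 T abar ε N *
            ∑ j ∈ Finset.Icc (N / 2 + 1) N, (g (j - 1) - g j) := by
          rw [Finset.mul_sum]
      _ = 2 * (abar ^ 2)⁻¹ * sH2 T abar ε N *
          (Real.exp (-(abar * sRho T abar ε N) / ε) - Real.exp (-(abar * T) / ε)) := by
          rw [tele_sum g (N / 2) N (by omega)]
          simp only [hg, hxiN2, hxiN]
  · -- part 2
    have hexpρ : Real.exp (-(abar * sRho T abar ε N) / ε) = (N : ℝ)⁻¹ := by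
      rw [hρeq]
      have ha0 : abar ≠ 0 := ne_of_gt habar
      have hε0 : ε ≠ 0 := ne_of_gt hε
      have : -(abar * (abar⁻¹ * ε * Real.log N)) / ε = -Real.log N := by
        field_simp
      rw [this, Real.exp_neg, Real.exp_log hN0]
    rw [hexpρ]
    apply mul_le_mul_of_nonneg_left _ hC
    linarith [Real.exp_pos (-(abar * T) / ε)]
  · -- part 3
    have hH2le : sH2 T abar ε N ≤ 2 * T / N := by
      unfold sH2
      gcongr
      linarith
    have hstep3 : 2 * (abar ^ 2)⁻¹ * sH2 T abar ε N * (N : ℝ)⁻¹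
        ≤ 2 * (abar ^ 2)⁻¹ * (2 * T / N) * (N : ℝ)⁻¹ := by
      apply mul_le_mul_of_nonneg_right
        (mul_le_mul_of_nonneg_left hH2le (by positivity)) (by positivity)
    have heq3 : 2 * (abar ^ 2)⁻¹ * (2 * T / N) * (N : ℝ)⁻¹
        = 4 * T * (abar ^ 2)⁻¹ * ((N : ℝ) ^ 2)⁻¹ := by
      field_simp
      ring
    linarith [heq3 ▸ hstep3]
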